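/- Let n ≥ 1, let x₁, …, x_n be positive reals with Σᵢ xᵢ = 1, and let 0 < η ≤ 1. Then there exists a partition 𝒜 = (A₁, …, A_k) of {1, …, n} such that, writing S_j = Σ_{i∈A_j} xᵢ, every part satisfies S_j ≥ η, and the cost c(𝒜, x) = Σ_{j=1}^{k} S_j² − Σ_{i=1}^{n} xᵢ² satisfies c(𝒜, x) < 2η. -/

import Mathlib

open Finset

/-- Main induction: any nonempty subset `F` with weight at least `η` admits a fat
partition with cost less than `2 * η * (weight of F)`. -/
theorem fat_partition_aux {n : ℕ} (x : Fin n → ℝ) (hx : ∀ i, 0 < x i) (η : ℝ)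
    (hη0 : 0 < η) :
    ∀ F : Finset (Fin n), η ≤ ∑ i ∈ F, x i →
      ∃ P : Finpartition F, (∀ A ∈ P.parts, η ≤ ∑ i ∈ A, x i) ∧
        (∑ A ∈ P.parts, (∑ i ∈ A, x i) ^ 2) - (∑ i ∈ F, (x i) ^ 2)
          < 2 * η * (∑ i ∈ F, x i) := by
  classical
  intro F
  induction F using Finset.strongInductionOn with
  | _ F IH =>
  intro hF
  set s : ℝ := ∑ i ∈ F, x i with hs
  -- the family of subsets with weight at least η, and a minimal one
  set 𝒮 : Finset (Finset (Fin n)) :=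
    F.powerset.filter (fun T => η ≤ ∑ i ∈ T, x i) with h𝒮
  have hF𝒮 : F ∈ 𝒮 := by
    simp only [h𝒮, mem_filter, mem_powerset]
    exact ⟨subset_rfl, hF⟩
  obtain ⟨T, hT𝒮, hmin⟩ :=
    Finset.exists_min_image 𝒮 (fun T => ∑ i ∈ T, x i) ⟨F, hF𝒮⟩
  have hTsub : T ⊆ F := (mem_powerset.mp (mem_filter.mp hT𝒮).1)
  have hτ : η ≤ ∑ i ∈ T, x i := (mem_filter.mp hT𝒮).2
  have fact0 : ∀ A : Finset (Fin n), A ⊆ F → η ≤ ∑ i ∈ A, x i →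
      (∑ i ∈ T, x i) ≤ ∑ i ∈ A, x i := by
    intro A hA hηA
    exact hmin A (by simp only [h𝒮, mem_filter, mem_powerset]; exact ⟨hA, hηA⟩)
  have hTne : T.Nonempty := by
    rcases T.eq_empty_or_nonempty with h | h
    · exfalso; rw [h] at hτ; simp at hτ; linarith
    · exact h
  have hsdiff : (∑ i ∈ F \ T, x i) + ∑ i ∈ T, x i = s := Finset.sum_sdiff hTsub
  have hsqdiff : (∑ i ∈ F \ T, (x i) ^ 2) + ∑ i ∈ T, (x i) ^ 2
      = ∑ i ∈ F, (x i) ^ 2 := Finset.sum_sdiff hTsub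
  by_cases hrest : η ≤ ∑ i ∈ F \ T, x i
  · -- peel off the minimal part T and recurse
    have hss : F \ T ⊂ F := Finset.sdiff_ssubset hTsub hTne
    obtain ⟨P', hfat', hcost'⟩ := IH (F \ T) hss hrest
    have hTdisj : Disjoint (F \ T) T := Finset.sdiff_disjoint
    have hTnebot : T ≠ (⊥ : Finset (Fin n)) := by
      simpa [Finset.bot_eq_empty] using hTne.ne_empty
    have hsup : (F \ T) ⊔ T = F := by
      simpa [Finset.sup_eq_union] using Finset.sdiff_union_of_subset hTsub
    refine ⟨P'.extend hTnebot hTdisj hsup, ?_, ?_⟩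
    · intro A hA
      rw [Finpartition.extend_parts, mem_insert] at hA
      rcases hA with rfl | hA
      · exact hτ
      · exact hfat' A hA
    · have hTnotmem : T ∉ P'.parts := by
        intro hmem
        obtain ⟨i, hi⟩ := hTne
        have : T ⊆ F \ T := P'.le hmem
        have := this hi
        simp at this
        exact this.2 hi
      rw [Finpartition.extend_parts, Finset.sum_insert hTnotmem]
      -- cost of the part T is < 2 η τ
      have hcostT : (∑ i ∈ T, x i) ^ 2 - (∑ i ∈ T, (x i) ^ 2)
          < 2 * η * ∑ i ∈ T, x i := by
        rcases eq_or_lt_of_le (Finset.one_le_card.mpr hTne) with hcard | hcard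
        · -- singleton: cost 0
          obtain ⟨i, rfl⟩ := Finset.card_eq_one.mp hcard.symm
          simp only [Finset.sum_singleton]
          have := hx i
          nlinarith
        · -- at least two elements
          obtain ⟨i, hi⟩ := hTne
          have herase : (∑ j ∈ T.erase i, x j) + x i = ∑ j ∈ T, x j :=
            Finset.sum_erase_add T x hi
          have hxiη : x i < η := by
            by_contra hcon
            push_neg at hcon
            have h1 : (∑ j ∈ T, x j) ≤ x i := by
              have : ({i} : Finset (Fin n)) ⊆ F := by
                simp [Finset.singleton_subset_iff]; exact hTsub hi
              simpa using fact0 {i} this (by simpa using hcon)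
            have hne : (T.erase i).Nonempty := by
              rw [← Finset.card_pos, Finset.card_erase_of_mem hi]; omega
            have hpos : 0 < ∑ j ∈ T.erase i, x j :=
              Finset.sum_pos (fun j _ => hx j) hne
            linarith
          have heraseη : (∑ j ∈ T.erase i, x j) < η := by
            by_contra hcon
            push_neg at hcon
            have := fact0 (T.erase i) ((Finset.erase_subset _ _).trans hTsub) hcon
            have := hx i
            linarith
          have hτ2 : (∑ j ∈ T, x j) < 2 * η := by linarith
          have hσpos : 0 < ∑ j ∈ T, (x j) ^ 2 :=
            Finset.sum_pos (fun j _ => pow_pos (hx j) 2) ⟨i, hi⟩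
          have hτpos : 0 < ∑ j ∈ T, x j := lt_of_lt_of_le hη0 hτ
          nlinarith
      have hexp : 2 * η * s = 2 * η * (∑ i ∈ F \ T, x i) + 2 * η * (∑ i ∈ T, x i) := by
        rw [← hsdiff]; ring
      linarith
  · -- cannot peel: the rest is lighter than η; use the single part F
    push_neg at hrest
    have hFne : F.Nonempty := hTne.mono hTsub
    have hFnebot : F ≠ (⊥ : Finset (Fin n)) := by
      simpa [Finset.bot_eq_empty] using hFne.ne_empty
    refine ⟨Finpartition.indiscrete hFnebot, ?_, ?_⟩
    · intro A hA
      rw [Finpartition.indiscrete_parts, mem_singleton] at hA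
      subst hA; exact hF
    · rw [Finpartition.indiscrete_parts, Finset.sum_singleton]
      have hσpos : 0 < ∑ i ∈ F, (x i) ^ 2 :=
        Finset.sum_pos (fun j _ => pow_pos (hx j) 2) hFne
      have hspos : 0 < s := lt_of_lt_of_le hη0 hF
      by_cases hs2 : s ≤ 2 * η
      · nlinarith
      · push_neg at hs2
        have hτbig : s - η < ∑ i ∈ T, x i := by linarith
        have noWindow : ∀ A : Finset (Fin n), A ⊆ F → (∑ i ∈ A, x i) < s - η →
            (∑ i ∈ A, x i) < η := by
          intro A hA hlt
          by_contra hcon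
          push_neg at hcon
          have := fact0 A hA hcon
          linarith
        by_cases hbig : ∃ i ∈ F, η ≤ x i
        · obtain ⟨i, hiF, hxi⟩ := hbig
          have h1 : (∑ j ∈ T, x j) ≤ x i := by
            have hss : ({i} : Finset (Fin n)) ⊆ F := by
              simp [Finset.singleton_subset_iff, hiF]
            simpa using fact0 {i} hss (by simpa using hxi)
          have hxibig : s - η < x i := by linarith
          have hxisq : (s - η) ^ 2 < (x i) ^ 2 := by nlinarith
          have hσi : (x i) ^ 2 ≤ ∑ j ∈ F, (x j) ^ 2 :=
            Finset.single_le_sum (f := fun j => (x j) ^ 2)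
              (fun j _ => by positivity) hiF
          nlinarith
        · push_neg at hbig
          set t : ℝ := s - 2 * η with ht
          have htpos : 0 < t := by simp only [ht]; linarith
          set D : Finset (Fin n) := F.filter (fun i => x i ≤ t) with hD
          set B : Finset (Fin n) := F.filter (fun i => ¬ x i ≤ t) with hB
          set δ : ℝ := ∑ i ∈ D, x i with hδ
          have hδ0 : 0 ≤ δ := Finset.sum_nonneg (fun i _ => (hx i).le)
          have hDB : δ + ∑ i ∈ B, x i = s :=
            Finset.sum_filter_add_sum_filter_not F _ x
          have hDBsq : (∑ i ∈ D, (x i) ^ 2) + ∑ i ∈ B, (x i) ^ 2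
              = ∑ i ∈ F, (x i) ^ 2 :=
            Finset.sum_filter_add_sum_filter_not F _ _
          have hηt : η + t = s - η := by simp only [ht]; ring
          -- Fact 1: items of D cannot push a light set past η
          have fact1 : ∀ E : Finset (Fin n), E ⊆ D →
              ∀ A : Finset (Fin n), A ⊆ F → Disjoint A E →
              (∑ i ∈ A, x i) < η → (∑ i ∈ A, x i) + (∑ i ∈ E, x i) < η := by
            intro E
            induction E using Finset.induction_on with
            | empty => intro _ A _ _ hA; simpa using hA
            | insert _ _ hdE ih =>
              rename_i d E
              intro hsub A hAF hdisj hAlt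
              have hdD : d ∈ D := hsub (mem_insert_self d E)
              have hdt : x d ≤ t := (mem_filter.mp hdD).2
              have hdF : d ∈ F := (mem_filter.mp hdD).1
              have hdA : d ∉ A := by
                intro hcon
                exact (Finset.disjoint_left.mp hdisj hcon) (mem_insert_self d E)
              have hA' : insert d A ⊆ F := by
                intro j hj
                rcases mem_insert.mp hj with rfl | hj
                · exact hdF
                · exact hAF hj
              have hsumA' : (∑ i ∈ insert d A, x i) = x d + ∑ i ∈ A, x i :=
                Finset.sum_insert hdA
              have hlt' : (∑ i ∈ insert d A, x i) < η := by
                apply noWindow _ hA'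
                rw [hsumA']
                linarith
              have hdisj' : Disjoint (insert d A) E := by
                rw [Finset.disjoint_left]
                intro j hj hjE
                rcases mem_insert.mp hj with rfl | hj
                · exact hdE hjE
                · exact (Finset.disjoint_left.mp hdisj hj) (mem_insert.mpr (Or.inr hjE))
              have := ih ((Finset.subset_insert d E).trans hsub) (insert d A) hA' hdisj' hlt'
              rw [hsumA'] at this
              rw [Finset.sum_insert hdE]
              linarith
          have δfact : ∀ A : Finset (Fin n), A ⊆ F → Disjoint A D →
              (∑ i ∈ A, x i) < η → (∑ i ∈ A, x i) + δ < η :=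
            fun A hA hd hlt => fact1 D subset_rfl A hA hd hlt
          set L : Finset (Fin n) := B.filter (fun i => x i ≤ t + δ) with hL
          set H : Finset (Fin n) := B.filter (fun i => ¬ x i ≤ t + δ) with hH
          have hLH : (∑ i ∈ L, x i) + ∑ i ∈ H, x i = ∑ i ∈ B, x i :=
            Finset.sum_filter_add_sum_filter_not B _ x
          have hLHsq : (∑ i ∈ L, (x i) ^ 2) + ∑ i ∈ H, (x i) ^ 2
              = ∑ i ∈ B, (x i) ^ 2 :=
            Finset.sum_filter_add_sum_filter_not B _ _
          have hLB : L ⊆ B := Finset.filter_subset _ _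
          have hBF : B ⊆ F := Finset.filter_subset _ _
          have hBD : Disjoint B D := by
            rw [Finset.disjoint_left]
            intro j hjB hjD
            exact (mem_filter.mp hjB).2 (mem_filter.mp hjD).2
          -- Fact 2: every subset of L is light
          have fact2 : ∀ A : Finset (Fin n), A ⊆ L → (∑ i ∈ A, x i) < η := by
            intro A
            induction A using Finset.induction_on with
            | empty => intro _; simpa using hη0
            | insert _ _ hlA ih =>
              rename_i l A
              intro hsub
              have hAL : A ⊆ L := (Finset.subset_insert l A).trans hsub
              have hAη : (∑ i ∈ A, x i) < η := ih hAL
              have hAδ : (∑ i ∈ A, x i) + δ < η :=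
                δfact A ((hAL.trans hLB).trans hBF)
                  (Finset.disjoint_left.mpr fun j hj hjD =>
                    (Finset.disjoint_left.mp hBD (hLB (hAL hj))) hjD) hAη
              have hlL : l ∈ L := hsub (mem_insert_self l A)
              have hlval : x l ≤ t + δ := (mem_filter.mp hlL).2
              apply noWindow _ (fun j hj => by
                rcases mem_insert.mp hj with rfl | hj
                · exact hBF (hLB hlL)
                · exact hBF (hLB (hAL hj)))
              rw [Finset.sum_insert hlA]
              linarith
          have hLlight : (∑ i ∈ L, x i) < η := fact2 L subset_rfl
          have hLδ : (∑ i ∈ L, x i) + δ < η :=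
            δfact L (hLB.trans hBF)
              (Finset.disjoint_left.mpr fun j hj => Finset.disjoint_left.mp hBD (hLB hj))
              hLlight
          have hHbig : η + t < ∑ i ∈ H, x i := by
            have : δ + ((∑ i ∈ L, x i) + ∑ i ∈ H, x i) = s := by rw [hLH]; exact hDB
            linarith
          have hHne : H.Nonempty := by
            rcases H.eq_empty_or_nonempty with h | h
            · exfalso
              rw [h] at hHbig
              simp at hHbig
              linarith
            · exact h
          have hσD : 0 ≤ ∑ i ∈ D, (x i) ^ 2 :=
            Finset.sum_nonneg (fun i _ => by positivity)
          have hσL : t * (∑ i ∈ L, x i) ≤ ∑ i ∈ L, (x i) ^ 2 := by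
            rw [Finset.mul_sum]
            apply Finset.sum_le_sum
            intro i hi
            have h1 : t < x i := by
              have := (mem_filter.mp (hLB hi)).2
              linarith [not_le.mp this]
            nlinarith [hx i]
          have hσH : (t + δ) * (∑ i ∈ H, x i) < ∑ i ∈ H, (x i) ^ 2 := by
            rw [Finset.mul_sum]
            apply Finset.sum_lt_sum_of_nonempty hHne
            intro i hi
            have h1 : t + δ < x i := not_le.mp (mem_filter.mp hi).2
            nlinarith [hx i]
          -- conclude σ > t * s
          have hσ : t * s < ∑ i ∈ F, (x i) ^ 2 := by
            have e1 : s = δ + ((∑ i ∈ L, x i) + ∑ i ∈ H, x i) := by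
              rw [hLH]; linarith
            have hδH : δ * t ≤ δ * (∑ i ∈ H, x i) := by
              apply mul_le_mul_of_nonneg_left _ hδ0
              linarith
            have e2 : t * s = t * δ + t * (∑ i ∈ L, x i) + t * (∑ i ∈ H, x i) := by
              rw [e1]; ring
            have hσH' : t * (∑ i ∈ H, x i) + δ * (∑ i ∈ H, x i) < ∑ i ∈ H, (x i) ^ 2 := by
              have : (t + δ) * (∑ i ∈ H, x i) = t * (∑ i ∈ H, x i) + δ * (∑ i ∈ H, x i) := by ring
              linarith
            have hδt : t * δ = δ * t := by ring
            linarith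
          have : s ^ 2 - t * s = 2 * η * s := by rw [ht]; ring
          linarith

/-- The number greedy partitioning lemma: if x₁, …, x_n are positive reals summing
to 1 (n ≥ 1) and 0 < η ≤ 1, then there is a partition 𝒜 of {1, …, n} which is
(x, η)-fat (each part A satisfies Σ_{i∈A} xᵢ ≥ η) and whose cost
c(𝒜, x) = Σ_{A∈𝒜} (Σ_{i∈A} xᵢ)² − Σᵢ xᵢ² is less than 2η. -/
theorem statement8 (n : ℕ) (hn : 1 ≤ n) (x : Fin n → ℝ) (hx : ∀ i, 0 < x i)
    (hsum : ∑ i, x i = 1) (η : ℝ) (hη0 : 0 < η) (hη1 : η ≤ 1) :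
    ∃ P : Finpartition (univ : Finset (Fin n)),
      (∀ A ∈ P.parts, η ≤ ∑ i ∈ A, x i) ∧
      (∑ A ∈ P.parts, (∑ i ∈ A, x i) ^ 2) - ∑ i, (x i) ^ 2 < 2 * η := by
  obtain ⟨P, hfat, hcost⟩ :=
    fat_partition_aux x hx η hη0 univ (by rw [hsum]; exact hη1)
  refine ⟨P, hfat, ?_⟩
  rw [hsum] at hcost
  simpa using hcost
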